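/- arXiv:2109.03085 — 5 statements merged into one kernel-verified Lean document; each statement's English description precedes it below -/
import Mathlib

section
/- Let λ, μ_d, t > 0 and let b > w be positive integers. Then the polynomial p(x) = λ x^b − (λ + μ_d + 1/t) x^w + μ_d has exactly w roots (counted with multiplicity) in the open unit disk of the complex plane. -/
open Polynomial Complex Filter

noncomputable def rqQ (lam c d : ℝ) (b w : ℕ) : ℂ[X] :=
  C (lam:ℂ) * X^b - C (c:ℂ) * X^w + C (d:ℂ)

noncomputable def rqN (lam c : ℝ) (b w : ℕ) (d : ℝ) : ℕ :=
  Multiset.card ((rqQ lam c d b w).roots.filter (fun z => ‖z‖ < 1))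

lemma rq_eval (lam c d : ℝ) (b w : ℕ) (z : ℂ) :
    (rqQ lam c d b w).eval z = (lam:ℂ) * z^b - (c:ℂ) * z^w + (d:ℂ) := by
  simp [rqQ]

lemma rq_degree (lam c d : ℝ) {b w : ℕ} (hlam : lam ≠ 0) (hbw : w < b) :
    (rqQ lam c d b w).degree = (b : WithBot ℕ) := by
  have h1 : rqQ lam c d b w = C (lam:ℂ) * X^b + (C (d:ℂ) - C (c:ℂ) * X^w) := by
    rw [rqQ]; ring
  have hA : (C (lam:ℂ) * X^b).degree = (b : WithBot ℕ) := by
    rw [degree_C_mul_X_pow _ (by exact_mod_cast Complex.ofReal_ne_zero.2 hlam)]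
  have hR : (C (d:ℂ) - C (c:ℂ) * X^w).degree < (b : WithBot ℕ) := by
    refine lt_of_le_of_lt (degree_sub_le _ _) (max_lt (lt_of_le_of_lt degree_C_le ?_)
      (lt_of_le_of_lt (degree_C_mul_X_pow_le _ _) ?_))
    · exact_mod_cast (Nat.zero_le w).trans_lt hbw
    · exact_mod_cast hbw
  rw [h1, degree_add_eq_left_of_degree_lt (by rw [hA]; exact hR), hA]

lemma rq_natDegree (lam c d : ℝ) {b w : ℕ} (hlam : lam ≠ 0) (hbw : w < b) :
    (rqQ lam c d b w).natDegree = b :=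
  natDegree_eq_of_degree_eq_some (rq_degree lam c d hlam hbw)

lemma rq_ne_zero (lam c d : ℝ) {b w : ℕ} (hlam : lam ≠ 0) (hbw : w < b) :
    rqQ lam c d b w ≠ 0 := by
  intro h
  have h2 := rq_degree lam c d hlam hbw (w := w) (b := b)
  rw [h, degree_zero] at h2
  exact (WithBot.bot_ne_coe) h2

lemma rq_leadingCoeff (lam c d : ℝ) {b w : ℕ} (hlam : lam ≠ 0) (hbw : w < b) :
    (rqQ lam c d b w).leadingCoeff = (lam : ℂ) := by
  rw [leadingCoeff, rq_natDegree lam c d hlam hbw, rqQ]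
  simp [coeff_C, coeff_C_mul, coeff_X_pow,
    (Nat.lt_of_le_of_lt (Nat.zero_le w) hbw).ne', hbw.ne']

lemma rq_roots_card (lam c d : ℝ) {b w : ℕ} (hlam : lam ≠ 0) (hbw : w < b) :
    Multiset.card (rqQ lam c d b w).roots = b := by
  have h := splits_iff_card_roots.1 (IsAlgClosed.splits (rqQ lam c d b w))
  rwa [rq_natDegree lam c d hlam hbw] at h

lemma rq_root_eq {lam c d : ℝ} {b w : ℕ} {z : ℂ}
    (hz : (rqQ lam c d b w).IsRoot z) : (c:ℂ) * z^w = (lam:ℂ) * z^b + (d:ℂ) := by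
  have h := hz
  rw [IsRoot, rq_eval] at h
  linear_combination -h

lemma rq_not_on_circle {lam c d : ℝ} {b w : ℕ} {z : ℂ} (hlam : 0 < lam)
    (hd : lam + |d| < c) (hz : (rqQ lam c d b w).IsRoot z) : ‖z‖ ≠ 1 := by
  intro h1
  have he := rq_root_eq hz
  have hc : (0:ℝ) < c := lt_of_le_of_lt (by positivity) hd
  have hnorm : ‖(c:ℂ) * z^w‖ = c := by
    rw [norm_mul, norm_pow, h1, one_pow, mul_one, Complex.norm_real,
      Real.norm_eq_abs, abs_of_pos hc]
  have hle : ‖(lam:ℂ) * z^b + (d:ℂ)‖ ≤ lam + |d| := by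
    refine le_trans (norm_add_le _ _) ?_
    rw [norm_mul, norm_pow, h1, one_pow, mul_one, Complex.norm_real,
      Complex.norm_real, Real.norm_eq_abs, Real.norm_eq_abs, abs_of_pos hlam]
  rw [he] at hnorm
  linarith [hnorm ▸ hle]

lemma rq_root_bound {lam c d D : ℝ} {b w : ℕ} {z : ℂ} (hlam : 0 < lam)
    (hc : 0 ≤ c) (hD : 0 ≤ D) (hd : |d| ≤ D) (hbw : w < b)
    (hz : (rqQ lam c d b w).IsRoot z) : ‖z‖ ≤ max 1 ((c + D)/lam) := by
  rcases le_or_gt ‖z‖ 1 with h | h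
  · exact le_max_of_le_left h
  · refine le_max_of_le_right ?_
    have he := rq_root_eq hz
    have h1 : (1:ℝ) ≤ ‖z‖ := h.le
    have hzw : (1:ℝ) ≤ ‖z‖^w := one_le_pow₀ h1
    have hkey : lam * ‖z‖^b ≤ (c + D) * ‖z‖^w := by
      have : ‖(lam:ℂ) * z^b‖ ≤ ‖(c:ℂ) * z^w‖ + ‖(d:ℂ)‖ := by
        calc ‖(lam:ℂ) * z^b‖ = ‖(c:ℂ) * z^w - (d:ℂ)‖ := by rw [eq_sub_iff_add_eq.2 he.symm]
        _ ≤ _ := norm_sub_le _ _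
      simp only [norm_mul, norm_pow, Complex.norm_real, Real.norm_eq_abs,
        abs_of_pos hlam] at this
      have hdz : |d| ≤ D * ‖z‖^w := le_trans hd (le_mul_of_one_le_right hD hzw)
      have habs : |c| = c := abs_of_nonneg hc
      nlinarith [this]
    have hsplit : ‖z‖^b = ‖z‖^(b-w) * ‖z‖^w := by
      rw [← pow_add]; congr 1; omega
    have hpos : (0:ℝ) < ‖z‖^w := lt_of_lt_of_le one_pos hzw
    have h2 : lam * ‖z‖^(b-w) ≤ c + D := by
      rw [hsplit] at hkey
      have := (mul_le_mul_iff_left₀ hpos).1 (by linarith [hkey] : lam * ‖z‖^(b-w) * ‖z‖^w ≤ (c+D) * ‖z‖^w)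
      exact this
    have h3 : ‖z‖ ≤ ‖z‖^(b-w) := le_self_pow₀ h1 (by omega)
    rw [le_div_iff₀ hlam]
    nlinarith

lemma rq_N_zero {lam c : ℝ} {b w : ℕ} (hlam : 0 < lam) (hc : lam < c) (hbw : w < b) :
    Multiset.card (((rqQ lam c 0 b w).roots).filter (fun z => ‖z‖ < 1)) = w := by
  have hlam' : (lam:ℂ) ≠ 0 := Complex.ofReal_ne_zero.2 hlam.ne'
  set a : ℂ := ((c/lam : ℝ) : ℂ) with ha
  have ha2 : a = (c:ℂ)/(lam:ℂ) := by rw [ha]; push_cast; ring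
  have key : (C (lam:ℂ)) * C ((c:ℂ)/(lam:ℂ)) = C (c:ℂ) := by
    rw [← C_mul]; congr 1; field_simp
  have hpow : (X:ℂ[X])^(b-w) * X^w = X^b := by
    rw [← pow_add]; congr 1; omega
  have hfact : rqQ lam c 0 b w = C (lam:ℂ) * ((X^(b-w) - C a) * X^w) := by
    rw [rqQ, ha2, Complex.ofReal_zero, C_0, add_zero, sub_mul, mul_sub, hpow, ← mul_assoc, key]
  have hA : (X^(b-w) - C a : ℂ[X]) ≠ 0 := X_pow_sub_C_ne_zero (by omega) a
  have hX : ((X:ℂ[X])^w) ≠ 0 := pow_ne_zero _ X_ne_zero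
  have hroots : (rqQ lam c 0 b w).roots
      = (X^(b-w) - C a : ℂ[X]).roots + w • ({0} : Multiset ℂ) := by
    rw [hfact, roots_C_mul _ hlam', roots_mul (mul_ne_zero hA hX), roots_pow, roots_X]
  rw [hroots, Multiset.filter_add]
  have h1 : Multiset.filter (fun z => ‖z‖ < 1) ((X^(b-w) - C a : ℂ[X]).roots) = 0 := by
    rw [Multiset.filter_eq_nil]
    intro z hz
    have hz' : z^(b-w) = a := by
      have := isRoot_of_mem_roots hz
      rw [IsRoot, eval_sub, eval_pow, eval_X, eval_C, sub_eq_zero] at this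
      exact this
    have hna : ‖a‖ = c / lam := by
      rw [ha, Complex.norm_real, Real.norm_eq_abs, abs_of_pos (div_pos (hlam.trans hc) hlam)]
    have hgt : (1:ℝ) < ‖z‖^(b-w) := by
      have hh : ‖z‖^(b-w) = c/lam := by rw [← norm_pow, hz', hna]
      rw [hh]
      exact (one_lt_div hlam).2 hc
    intro hlt
    have : ‖z‖^(b-w) ≤ 1 := pow_le_one₀ (norm_nonneg z) hlt.le
    linarith
  have h2 : Multiset.filter (fun z => ‖z‖ < 1) (w • ({0} : Multiset ℂ))
      = w • ({0} : Multiset ℂ) := by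
    rw [Multiset.filter_eq_self]
    intro z hz
    rw [Multiset.mem_nsmul] at hz
    · rcases hz with ⟨-, hz⟩
      rw [Multiset.mem_singleton] at hz
      subst hz; simp
  rw [h1, h2]
  simp

lemma rq_exists_vec (s : Multiset ℂ) (n : ℕ) (h : Multiset.card s = n) :
    ∃ r : Fin n → ℂ, s = Multiset.map r Finset.univ.val := by
  have hl : s.toList.length = n := by rw [Multiset.length_toList, h]
  subst hl
  refine ⟨s.toList.get, ?_⟩
  rw [Fin.univ_val_map, List.ofFn_get, Multiset.coe_toList]

lemma rq_filter_card (n : ℕ) (r : Fin n → ℂ) (p : ℂ → Prop) [DecidablePred p] :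
    Multiset.card (Multiset.filter p (Multiset.map r Finset.univ.val))
      = (Finset.univ.filter (fun i => p (r i))).card := by
  rw [Multiset.filter_map, Multiset.card_map, Finset.card_filter]
  simp [Finset.filter_val, Function.comp]
  rfl

lemma rq_map_prod {n : ℕ} (r : Fin n → ℂ) :
    ((Multiset.map r Finset.univ.val).map (fun a => X - C a)).prod
      = ∏ i : Fin n, (X - C (r i)) := by
  rw [Finset.prod_eq_multiset_prod, Multiset.map_map]
  rfl

lemma rq_eval_prod {lam c d : ℝ} {b w : ℕ} (hlam : lam ≠ 0) (hbw : w < b)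
    {r : Fin b → ℂ} (hr : (rqQ lam c d b w).roots = Multiset.map r Finset.univ.val)
    (z : ℂ) : (rqQ lam c d b w).eval z = (lam:ℂ) * ∏ i : Fin b, (z - r i) := by
  have h := C_leadingCoeff_mul_prod_multiset_X_sub_C
    (p := rqQ lam c d b w) (by rw [rq_roots_card lam c d hlam hbw, rq_natDegree lam c d hlam hbw])
  rw [rq_leadingCoeff lam c d hlam hbw, hr, rq_map_prod] at h
  rw [← h, eval_mul, eval_C, eval_prod]
  simp

lemma rq_roots_of_eval {lam c d : ℝ} {b w : ℕ} (hlam : lam ≠ 0) (hbw : w < b)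
    {ρ : Fin b → ℂ}
    (h : ∀ z : ℂ, (rqQ lam c d b w).eval z = (lam:ℂ) * ∏ i : Fin b, (z - ρ i)) :
    (rqQ lam c d b w).roots = Multiset.map ρ Finset.univ.val := by
  have heq : rqQ lam c d b w = C (lam:ℂ) * ∏ i : Fin b, (X - C (ρ i)) := by
    apply Polynomial.funext
    intro z
    rw [h z, eval_mul, eval_C, eval_prod]
    simp
  rw [heq, roots_C_mul _ (Complex.ofReal_ne_zero.2 hlam), ← rq_map_prod,
    roots_multiset_prod_X_sub_C]

lemma rq_loc_const {lam c : ℝ} {b w : ℕ} (hlam : 0 < lam) (hcl : lam < c) (hbw : w < b)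
    {d₀ : ℝ} (hd₀ : |d₀| < c - lam) :
    ∀ᶠ d in nhds d₀, |d| < c - lam → rqN lam c b w d = rqN lam c b w d₀ := by
  set E := c - lam with hE
  have hE0 : 0 < E := by linarith
  have hc0 : (0:ℝ) ≤ c := by linarith
  by_contra hcon
  rw [Filter.not_eventually] at hcon
  have hfreq : ∃ᶠ d in nhds d₀, |d| < E ∧ rqN lam c b w d ≠ rqN lam c b w d₀ := by
    apply hcon.mono
    intro d hd
    push_neg at hd
    exact hd
  have hNB : (nhds d₀ ⊓ Filter.principal {d | |d| < E ∧ rqN lam c b w d ≠ rqN lam c b w d₀}).NeBot :=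
    Filter.frequently_iff_neBot.1 hfreq
  obtain ⟨u, hu⟩ := Filter.exists_seq_tendsto
    (nhds d₀ ⊓ Filter.principal {d | |d| < E ∧ rqN lam c b w d ≠ rqN lam c b w d₀})
  have hu1 : Filter.Tendsto u Filter.atTop (nhds d₀) := hu.mono_right inf_le_left
  have hu2 : ∀ᶠ n in Filter.atTop, |u n| < E ∧ rqN lam c b w (u n) ≠ rqN lam c b w d₀ :=
    hu.eventually (Filter.le_principal_iff.1 inf_le_right)
  obtain ⟨n₀, hn₀⟩ := Filter.eventually_atTop.1 hu2
  set v : ℕ → ℝ := fun n => u (n + n₀) with hv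
  have hv1 : Filter.Tendsto v Filter.atTop (nhds d₀) :=
    hu1.comp (Filter.tendsto_add_atTop_nat n₀)
  have hv2 : ∀ n, |v n| < E ∧ rqN lam c b w (v n) ≠ rqN lam c b w d₀ :=
    fun n => hn₀ (n + n₀) (Nat.le_add_left n₀ n)
  -- root vectors
  have hvec : ∀ n, ∃ r : Fin b → ℂ,
      (rqQ lam c (v n) b w).roots = Multiset.map r Finset.univ.val :=
    fun n => rq_exists_vec _ b (rq_roots_card lam c (v n) hlam.ne' hbw)
  choose r hr using hvec
  -- bound
  set B := max 1 ((c + E)/lam) with hB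
  have hbound : ∀ n, r n ∈ Set.pi Set.univ (fun _ : Fin b => Metric.closedBall (0:ℂ) B) := by
    intro n i _
    have hmem : r n i ∈ (rqQ lam c (v n) b w).roots := by
      rw [hr n]
      exact Multiset.mem_map_of_mem _ (Finset.mem_univ i)
    have hroot := isRoot_of_mem_roots hmem
    have := rq_root_bound (c := c) (D := E) hlam hc0 hE0.le (hv2 n).1.le hbw hroot
    rw [Metric.mem_closedBall, Complex.dist_eq, sub_zero]
    exact this
  have hScomp : IsCompact (Set.pi Set.univ (fun _ : Fin b => Metric.closedBall (0:ℂ) B)) :=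
    isCompact_univ_pi (fun _ => isCompact_closedBall _ _)
  obtain ⟨ρ, hρS, φ, hφ, hlim⟩ := hScomp.tendsto_subseq hbound
  have hlimi : ∀ i, Filter.Tendsto (fun n => r (φ n) i) Filter.atTop (nhds (ρ i)) :=
    fun i => tendsto_pi_nhds.1 hlim i
  -- eval identity for d₀
  have heval : ∀ z : ℂ, (rqQ lam c d₀ b w).eval z = (lam:ℂ) * ∏ i : Fin b, (z - ρ i) := by
    intro z
    have T1 : Filter.Tendsto (fun n => (rqQ lam c (v (φ n)) b w).eval z)
        Filter.atTop (nhds ((rqQ lam c d₀ b w).eval z)) := by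
      simp only [rq_eval]
      have : Filter.Tendsto (fun n => ((v (φ n) : ℝ) : ℂ)) Filter.atTop (nhds ((d₀:ℝ):ℂ)) :=
        (Complex.continuous_ofReal.tendsto d₀).comp (hv1.comp hφ.tendsto_atTop)
      exact (tendsto_const_nhds.sub tendsto_const_nhds).add this
    have T2 : Filter.Tendsto (fun n => (rqQ lam c (v (φ n)) b w).eval z)
        Filter.atTop (nhds ((lam:ℂ) * ∏ i : Fin b, (z - ρ i))) := by
      have : ∀ n, (rqQ lam c (v (φ n)) b w).eval z = (lam:ℂ) * ∏ i : Fin b, (z - r (φ n) i) :=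
        fun n => rq_eval_prod hlam.ne' hbw (hr (φ n)) z
      simp only [this]
      exact tendsto_const_nhds.mul
        (tendsto_finset_prod _ (fun i _ => tendsto_const_nhds.sub (hlimi i)))
    exact tendsto_nhds_unique T1 T2
  have hρroots : (rqQ lam c d₀ b w).roots = Multiset.map ρ Finset.univ.val :=
    rq_roots_of_eval hlam.ne' hbw heval
  -- each ρ i not on circle
  have hρcirc : ∀ i, ‖ρ i‖ ≠ 1 := by
    intro i
    have hmem : ρ i ∈ (rqQ lam c d₀ b w).roots := by
      rw [hρroots]; exact Multiset.mem_map_of_mem _ (Finset.mem_univ i)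
    exact rq_not_on_circle hlam (by linarith [hd₀] : lam + |d₀| < c) (isRoot_of_mem_roots hmem)
  -- eventually matching sides
  have hside : ∀ᶠ n in Filter.atTop, ∀ i, (‖r (φ n) i‖ < 1 ↔ ‖ρ i‖ < 1) := by
    rw [Filter.eventually_all]
    intro i
    rcases lt_or_gt_of_ne (hρcirc i) with h | h
    · have := ((hlimi i).norm.eventually_lt_const h)
      exact this.mono (fun n hn => by
        constructor
        · intro _; exact h
        · intro _; exact hn)
    · have := ((hlimi i).norm.eventually_const_lt h)
      exact this.mono (fun n hn => by
        constructor
        · intro hh; linarith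
        · intro hh; linarith)
  obtain ⟨n, hn⟩ := hside.exists
  have hcount : rqN lam c b w (v (φ n)) = rqN lam c b w d₀ := by
    rw [rqN, rqN, hρroots, hr (φ n), rq_filter_card, rq_filter_card]
    congr 1
    apply Finset.filter_congr
    intro i _
    exact hn i
  exact (hv2 (φ n)).2 hcount

lemma rq_main {lam c : ℝ} {b w : ℕ} (hlam : 0 < lam) (hcl : lam < c) (hbw : w < b)
    {d : ℝ} (hd : |d| < c - lam) : rqN lam c b w d = w := by
  set E := c - lam with hE
  set U : Set ℝ := {d | |d| < E ∧ rqN lam c b w d = w} with hU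
  set V : Set ℝ := {d | |d| < E ∧ rqN lam c b w d ≠ w} with hV
  have hopen : ∀ (P : ℕ → Prop), IsOpen {d | |d| < E ∧ P (rqN lam c b w d)} := by
    intro P
    rw [isOpen_iff_mem_nhds]
    intro d₀ hd₀
    have h1 : ∀ᶠ x in nhds d₀, |x| < E := by
      have : IsOpen {x : ℝ | |x| < E} := by
        have : {x : ℝ | |x| < E} = Set.Ioo (-E) E := by
          ext x; simp [abs_lt, Set.mem_Ioo]
        rw [this]; exact isOpen_Ioo
      exact this.eventually_mem hd₀.1
    have h2 := rq_loc_const hlam hcl hbw (d₀ := d₀) hd₀.1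
    filter_upwards [h1, h2] with x hx1 hx2
    exact ⟨hx1, by rw [hx2 hx1]; exact hd₀.2⟩
  have hUo : IsOpen U := hopen (fun n => n = w)
  have hVo : IsOpen V := hopen (fun n => n ≠ w)
  by_contra hne
  have hpre : IsPreconnected (Set.Ioo (-E) E) := isPreconnected_Ioo
  have hE0 : 0 < E := lt_of_le_of_lt (abs_nonneg d) hd
  have hcover : Set.Ioo (-E) E ⊆ U ∪ V := by
    intro x hx
    have hxE : |x| < E := abs_lt.2 ⟨hx.1, hx.2⟩
    by_cases h : rqN lam c b w x = w
    · exact Or.inl ⟨hxE, h⟩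
    · exact Or.inr ⟨hxE, h⟩
  have hUne : (Set.Ioo (-E) E ∩ U).Nonempty := by
    exact ⟨0, ⟨by linarith, hE0⟩, ⟨by simpa using hE0, rq_N_zero hlam hcl hbw⟩⟩
  have hVne : (Set.Ioo (-E) E ∩ V).Nonempty :=
    ⟨d, Set.mem_Ioo.2 ⟨(abs_lt.1 hd).1, (abs_lt.1 hd).2⟩, hd, hne⟩
  obtain ⟨x, -, hxU, hxV⟩ := hpre U V hUo hVo hcover hUne hVne
  exact hxV.2 hxU.2

theorem stmt0 (lam mud t : ℝ) (hlam : 0 < lam) (hmud : 0 < mud) (ht : 0 < t)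
    (b w : ℕ) (hw : 1 ≤ w) (hbw : w < b) :
    Multiset.card
      ((C (lam : ℂ) * X ^ b - C ((lam + mud + 1 / t : ℝ) : ℂ) * X ^ w +
        C ((mud : ℝ) : ℂ)).roots.filter (fun z => ‖z‖ < 1)) = w := by
  have ht' : 0 < 1 / t := by positivity
  have key := rq_main (lam := lam) (c := lam + mud + 1/t) (b := b) (w := w)
    hlam (by linarith) hbw (d := mud)
    (by rw [abs_of_pos hmud]; linarith)
  rw [rqN, rqQ] at key
  exact key
end

section
/- Let λ, μ_d, α, β, t > 0 and let R ∈ (0, α) satisfy λ β/(β + R) + μ_d α/(α − R) − (λ + μ_d + 1/t) = 0. Then the function ψ(u) = (1 − R/α) e^{−Ru} satisfies the integral equation λ ∫₀^∞ ψ(u + b) β e^{−βb} db − (λ + μ_d + 1/t) ψ(u) + μ_d ∫₀^u ψ(u − w) α e^{−αw} dw + μ_d e^{−αu} = 0 for all u ≥ 0. -/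
open Real MeasureTheory

lemma exp_ioi (c : ℝ) (hc : 0 < c) :
    (∫ x in Set.Ioi (0 : ℝ), Real.exp (-(c * x))) = 1 / c := by
  have h := MeasureTheory.integral_comp_mul_left_Ioi (fun y => Real.exp (-y)) 0 hc
  simp only [mul_zero] at h
  rw [h, integral_exp_neg_Ioi_zero]
  simp [one_div]

lemma exp_ii (c u : ℝ) (hc : c ≠ 0) :
    (∫ x in (0 : ℝ)..u, Real.exp (c * x)) = (Real.exp (c * u) - 1) / c := by
  have h := intervalIntegral.mul_integral_comp_mul_left (f := Real.exp) (a := 0) (b := u) (c := c)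
  rw [integral_exp, mul_zero, Real.exp_zero] at h
  field_simp
  exact h

theorem stmt7 (lam mud a bet t R : ℝ) (hlam : 0 < lam) (hmud : 0 < mud)
    (ha : 0 < a) (hbet : 0 < bet) (ht : 0 < t) (hR : R ∈ Set.Ioo 0 a)
    (hLund : lam * bet / (bet + R) + mud * a / (a - R) - (lam + mud + 1 / t) = 0)
    (psi : ℝ → ℝ) (hpsi : ∀ u : ℝ, psi u = (1 - R / a) * Real.exp (-R * u)) :
    ∀ u : ℝ, 0 ≤ u →
      lam * (∫ b in Set.Ioi (0 : ℝ), psi (u + b) * (bet * Real.exp (-bet * b)))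
        - (lam + mud + 1 / t) * psi u
        + mud * (∫ w in (0 : ℝ)..u, psi (u - w) * (a * Real.exp (-a * w)))
        + mud * Real.exp (-a * u) = 0 := by
  obtain ⟨hR0, hRa⟩ := hR
  intro u hu
  set C : ℝ := 1 - R / a with hC
  have haR : a - R ≠ 0 := by linarith
  have hbR : bet + R ≠ 0 := by positivity
  have h1 : (∫ b in Set.Ioi (0 : ℝ), psi (u + b) * (bet * Real.exp (-bet * b)))
      = C * Real.exp (-R * u) * bet * (1 / (bet + R)) := by
    have : ∀ b : ℝ, psi (u + b) * (bet * Real.exp (-bet * b))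
        = (C * Real.exp (-R * u) * bet) * Real.exp (-((bet + R) * b)) := by
      intro b
      rw [hpsi]
      have : Real.exp (-R * (u + b)) * Real.exp (-bet * b)
          = Real.exp (-R * u) * Real.exp (-((bet + R) * b)) := by
        rw [← Real.exp_add, ← Real.exp_add]; ring_nf
      calc (C * Real.exp (-R * (u + b))) * (bet * Real.exp (-bet * b))
          = C * bet * (Real.exp (-R * (u + b)) * Real.exp (-bet * b)) := by ring
        _ = C * bet * (Real.exp (-R * u) * Real.exp (-((bet + R) * b))) := by rw [this]
        _ = (C * Real.exp (-R * u) * bet) * Real.exp (-((bet + R) * b)) := by ring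
    simp_rw [this]
    rw [MeasureTheory.integral_const_mul, exp_ioi _ (by positivity)]
  have h2 : (∫ w in (0 : ℝ)..u, psi (u - w) * (a * Real.exp (-a * w)))
      = C * Real.exp (-R * u) * a * ((Real.exp ((R - a) * u) - 1) / (R - a)) := by
    have : ∀ w : ℝ, psi (u - w) * (a * Real.exp (-a * w))
        = (C * Real.exp (-R * u) * a) * Real.exp ((R - a) * w) := by
      intro w
      rw [hpsi]
      have : Real.exp (-R * (u - w)) * Real.exp (-a * w)
          = Real.exp (-R * u) * Real.exp ((R - a) * w) := by
        rw [← Real.exp_add, ← Real.exp_add]; ring_nf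
      calc (C * Real.exp (-R * (u - w))) * (a * Real.exp (-a * w))
          = C * a * (Real.exp (-R * (u - w)) * Real.exp (-a * w)) := by ring
        _ = C * a * (Real.exp (-R * u) * Real.exp ((R - a) * w)) := by rw [this]
        _ = (C * Real.exp (-R * u) * a) * Real.exp ((R - a) * w) := by ring
    simp_rw [this]
    rw [intervalIntegral.integral_const_mul, exp_ii _ _ (by intro h; apply haR; linarith)]
  rw [h1, h2, hpsi]
  have hexp : Real.exp (-R * u) * Real.exp ((R - a) * u) = Real.exp (-a * u) := by
    rw [← Real.exp_add]; ring_nf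
  have hL : lam + mud + 1 / t = lam * bet / (bet + R) + mud * a / (a - R) := by linarith
  rw [hL, hC, ← hexp]
  have ha' : a ≠ 0 := ha.ne'
  have hRa' : R - a ≠ 0 := by intro h; apply haR; linarith
  field_simp
  ring
end

section
/- Let λ, μ_d, α, β, t > 0, let R ∈ (0, α) solve λβ/(β+R) + μ_dα/(α−R) = λ + μ_d + 1/t, and set d₀ = t(λ/β − μ_d/α). Then the function V(u) = (1/α² − d₀/α)(α − R) e^{−Ru} + u + d₀ satisfies λ ∫₀^∞ V(u+b) β e^{−βb} db − (λ + μ_d + 1/t) V(u) + μ_d ∫₀^u V(u−w) α e^{−αw} dw + u/t = 0 for all u ≥ 0. -/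
open Real MeasureTheory Filter

private lemma expDeriv (c x : ℝ) :
    HasDerivAt (fun b : ℝ => Real.exp (c * b)) (c * Real.exp (c * x)) x := by
  simpa [mul_comm] using ((hasDerivAt_id x).const_mul c).exp

private lemma tendExp {k : ℝ} (hk : 0 < k) :
    Tendsto (fun b : ℝ => Real.exp (-k * b)) atTop (nhds 0) := by
  have h1 : Tendsto (fun b : ℝ => -k * b) atTop atBot :=
    Tendsto.const_mul_atTop_of_neg (neg_neg_iff_pos.mpr hk) tendsto_id
  exact Real.tendsto_exp_atBot.comp h1

private lemma tendMulExp {k : ℝ} (hk : 0 < k) :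
    Tendsto (fun b : ℝ => b * Real.exp (-k * b)) atTop (nhds 0) := by
  have h1 : Tendsto (fun b : ℝ => k * b) atTop atTop :=
    Tendsto.const_mul_atTop hk tendsto_id
  have h2 := (Real.tendsto_pow_mul_exp_neg_atTop_nhds_zero 1).comp h1
  have h3 := h2.const_mul (1 / k)
  rw [mul_zero] at h3
  refine h3.congr fun b => ?_
  simp only [Function.comp_apply, pow_one]
  field_simp

set_option maxHeartbeats 2000000 in
theorem stmt8 (lam mud a bet t R : ℝ) (hlam : 0 < lam) (hmud : 0 < mud)
    (ha : 0 < a) (hbet : 0 < bet) (ht : 0 < t) (hR : R ∈ Set.Ioo 0 a)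
    (hLund : lam * bet / (bet + R) + mud * a / (a - R) = lam + mud + 1 / t)
    (d0 : ℝ) (hd0 : d0 = t * (lam / bet - mud / a))
    (V : ℝ → ℝ) (hV : ∀ u : ℝ, V u = (1 / a ^ 2 - d0 / a) * (a - R) * Real.exp (-R * u) + u + d0) :
    ∀ u : ℝ, 0 ≤ u →
      lam * (∫ b in Set.Ioi (0 : ℝ), V (u + b) * (bet * Real.exp (-bet * b)))
        - (lam + mud + 1 / t) * V u
        + mud * (∫ w in (0 : ℝ)..u, V (u - w) * (a * Real.exp (-a * w)))
        + u / t = 0 := by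
  obtain ⟨hR0, hRa⟩ := hR
  have hane : a ≠ 0 := ha.ne'
  have hbne : bet ≠ 0 := hbet.ne'
  have htne : t ≠ 0 := ht.ne'
  have haR : a - R ≠ 0 := sub_ne_zero.mpr hRa.ne'
  have hRa' : R - a ≠ 0 := sub_ne_zero.mpr hRa.ne
  have hbR : (0:ℝ) < bet + R := by linarith
  have hbRne : bet + R ≠ 0 := hbR.ne'
  intro u hu
  set C : ℝ := (1 / a ^ 2 - d0 / a) * (a - R) with hC
  set E : ℝ := Real.exp (-R * u) with hE
  set F : ℝ := Real.exp (-a * u) with hF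
  -- the improper integral
  have hIoi : (∫ b in Set.Ioi (0 : ℝ), V (u + b) * (bet * Real.exp (-bet * b)))
      = C * E * (bet / (bet + R)) + (u + d0 + 1 / bet) := by
    set K : ℝ := C * E * (bet / (bet + R)) with hK
    set s : ℝ := u + d0 + 1 / bet with hs
    set g : ℝ → ℝ := fun b => -(K * Real.exp (-(bet + R) * b)) - (b + s) * Real.exp (-bet * b)
      with hg
    have hderiv : ∀ x : ℝ, HasDerivAt g (V (u + x) * (bet * Real.exp (-bet * x))) x := by
      intro x
      have h1 : HasDerivAt (fun b : ℝ => -(K * Real.exp (-(bet + R) * b)))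
          (-(K * (-(bet + R) * Real.exp (-(bet + R) * x)))) x :=
        (((expDeriv (-(bet + R)) x)).const_mul K).neg
      have h2 : HasDerivAt (fun b : ℝ => (b + s) * Real.exp (-bet * b))
          (1 * Real.exp (-bet * x) + (x + s) * (-bet * Real.exp (-bet * x))) x :=
        ((hasDerivAt_id x).add_const s).mul (expDeriv (-bet) x)
      have h3 := h1.sub h2
      refine h3.congr_deriv (Eq.symm ?_)
      rw [hV (u + x)]
      have hexp : Real.exp (-R * (u + x)) * Real.exp (-bet * x)
          = E * Real.exp (-(bet + R) * x) := by
        rw [hE, ← Real.exp_add, ← Real.exp_add]; ring_nf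
      have hKval : K * (bet + R) = C * E * bet := by rw [hK]; field_simp
      have hsval : bet * s = bet * (u + d0) + 1 := by rw [hs]; field_simp
      linear_combination (C * bet) * hexp - Real.exp (-(bet + R) * x) * hKval
        - Real.exp (-bet * x) * hsval
    have htend : Tendsto g atTop (nhds 0) := by
      have h1 := ((tendExp hbR).const_mul K).neg
      have h2 := (tendMulExp hbet).add ((tendExp hbet).const_mul s)
      have h3 := h1.sub h2
      simp only [mul_zero, neg_zero, add_zero, zero_sub, sub_zero, zero_add] at h3
      refine Tendsto.congr (fun b => ?_) h3
      simp only [hg]; ring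
    have hint : IntegrableOn (fun x => V (u + x) * (bet * Real.exp (-bet * x)))
        (Set.Ioi (0:ℝ)) := by
      have i1 : IntegrableOn (fun x : ℝ => Real.exp (-(bet + R) * x)) (Set.Ioi (0:ℝ)) :=
        exp_neg_integrableOn_Ioi 0 hbR
      have i2 : IntegrableOn (fun x : ℝ => Real.exp (-bet * x)) (Set.Ioi (0:ℝ)) :=
        exp_neg_integrableOn_Ioi 0 hbet
      have i3 : IntegrableOn (fun x : ℝ => x * Real.exp (-bet * x)) (Set.Ioi (0:ℝ)) := by
        refine integrableOn_Ioi_deriv_of_nonneg' (l := 0)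
          (g := fun x => -((x / bet + 1 / bet ^ 2) * Real.exp (-bet * x)))
          (fun x _ => ?_) (fun x hx => ?_) ?_
        · have hh : HasDerivAt (fun b : ℝ => (b / bet + 1 / bet ^ 2) * Real.exp (-bet * b))
              ((1 / bet) * Real.exp (-bet * x)
                + (x / bet + 1 / bet ^ 2) * (-bet * Real.exp (-bet * x))) x := by
            exact (((hasDerivAt_id x).div_const bet).add_const (1 / bet ^ 2)).mul
              (expDeriv (-bet) x)
          have := hh.neg
          refine this.congr_deriv (Eq.symm ?_)
          field_simp
          ring
        · have := (Real.exp_pos (-bet * x)).le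
          have hx' : (0:ℝ) ≤ x := le_of_lt hx
          positivity
        · have h1 := (tendMulExp hbet).const_mul (1 / bet)
          have h2 := (tendExp hbet).const_mul (1 / bet ^ 2)
          have h3 := (h1.add h2).neg
          simp only [mul_zero, add_zero, neg_zero] at h3
          refine Tendsto.congr (fun b => ?_) h3
          ring
      have isum := ((i1.const_mul (C * E * bet)).add (i2.const_mul ((u + d0) * bet))).add
        (i3.const_mul bet)
      refine isum.congr ?_
      filter_upwards [ae_restrict_mem measurableSet_Ioi] with x hx
      simp only [Pi.add_apply]
      rw [hV (u + x)]
      have hexp : Real.exp (-R * (u + x)) * Real.exp (-bet * x)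
          = E * Real.exp (-(bet + R) * x) := by
        rw [hE, ← Real.exp_add, ← Real.exp_add]; ring_nf
      linear_combination (-(C * bet)) * hexp
    have := integral_Ioi_of_hasDerivAt_of_tendsto
      ((hderiv 0).continuousAt.continuousWithinAt) (fun x _ => hderiv x) hint htend
    rw [this]
    simp only [hg, mul_zero, Real.exp_zero, mul_one, zero_add]
    ring
  -- the interval integral
  have hInt : (∫ w in (0:ℝ)..u, V (u - w) * (a * Real.exp (-a * w)))
      = C * (a / (R - a)) * (F - E) + (1 / a - d0) * F - (1 / a - u - d0) := by
    set H : ℝ → ℝ := fun w => C * E * (a / (R - a)) * Real.exp ((R - a) * w)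
      + (1 / a - (u - w + d0)) * Real.exp (-a * w) with hH
    have hderiv : ∀ x : ℝ, HasDerivAt H (V (u - x) * (a * Real.exp (-a * x))) x := by
      intro x
      have h1 : HasDerivAt (fun w : ℝ => C * E * (a / (R - a)) * Real.exp ((R - a) * w))
          (C * E * (a / (R - a)) * ((R - a) * Real.exp ((R - a) * x))) x :=
        (expDeriv (R - a) x).const_mul _
      have h2 : HasDerivAt (fun w : ℝ => (1 / a - (u - w + d0)) * Real.exp (-a * w))
          (1 * Real.exp (-a * x) + (1 / a - (u - x + d0)) * (-a * Real.exp (-a * x))) x := by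
        have hlin : HasDerivAt (fun w : ℝ => 1 / a - (u - w + d0)) 1 x := by
          have : HasDerivAt (fun w : ℝ => w + (1 / a - u - d0)) 1 x :=
            (hasDerivAt_id x).add_const _
          refine this.congr_of_eventuallyEq (Filter.Eventually.of_forall fun w => ?_)
          ring
        exact hlin.mul (expDeriv (-a) x)
      have h3 := h1.add h2
      refine h3.congr_deriv (Eq.symm ?_)
      rw [hV (u - x)]
      have hexp : Real.exp (-R * (u - x)) * Real.exp (-a * x)
          = E * Real.exp ((R - a) * x) := by
        rw [hE, ← Real.exp_add, ← Real.exp_add]; ring_nf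
      have h4 : C * E * (a / (R - a)) * (R - a) = C * E * a := by field_simp
      have h5 : (1 / a) * a = 1 := by field_simp
      linear_combination (C * a) * hexp - Real.exp ((R - a) * x) * h4
        + Real.exp (-a * x) * h5
    have hVc : Continuous V := by
      have : V = fun x => (1 / a ^ 2 - d0 / a) * (a - R) * Real.exp (-R * x) + x + d0 :=
        funext hV
      rw [this]; fun_prop
    have hIc : IntervalIntegrable (fun w => V (u - w) * (a * Real.exp (-a * w)))
        MeasureTheory.volume 0 u := by
      apply Continuous.intervalIntegrable
      fun_prop
    have := intervalIntegral.integral_eq_sub_of_hasDerivAt (f := H)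
      (fun x _ => hderiv x) hIc
    rw [this]
    have hEF : E * Real.exp ((R - a) * u) = F := by
      rw [hE, hF, ← Real.exp_add]; ring_nf
    simp only [hH, mul_zero, Real.exp_zero, mul_one, sub_zero]
    linear_combination (C * (a / (R - a))) * hEF
  rw [hIoi, hInt, hV u, ← hE]
  have key : lam * (C * E * (bet / (bet + R)) + (u + d0 + 1 / bet))
      - (lam + mud + 1 / t) * (C * E + u + d0)
      + mud * (C * (a / (R - a)) * (F - E) + (1 / a - d0) * F - (1 / a - u - d0)) + u / t
      = C * E * (lam * bet / (bet + R) + mud * a / (a - R) - (lam + mud + 1 / t)) := by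
    rw [hC]
    subst hd0
    field_simp
    ring
  rw [key, hLund]
  ring
end

section
/- Let c, p, μ, t > 0, let α_1, ..., α_n > 0 be distinct, and A_1, ..., A_n real with Σ A_j = 1 and Σ A_j α_j e^{−α_j w} ≥ 0 for all w > 0 (so f_W(w) = Σ A_j α_j e^{−α_j w} is a probability density). Suppose R > 0 satisfies cR + pμ Σ_j A_j α_j/(R + α_j) − (1/t + pμ) = 0, and set d₀ = t(pμ Σ_j A_j/α_j − c). Then V(u) = −d₀ e^{−Ru} + u + d₀ satisfies the integro-differential equation c V′(u) + (1/t + pμ) V(u) − pμ ∫₀^∞ V(u + w) f_W(w) dw − u/t = 0 for all u ≥ 0, together with the boundary condition V(0) = 0. -/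
open Real MeasureTheory

lemma intOn_exp' {b : ℝ} (hb : 0 < b) :
    IntegrableOn (fun w : ℝ => Real.exp (-(b * w))) (Set.Ioi 0) := by
  simpa [neg_mul] using exp_neg_integrableOn_Ioi 0 hb

lemma int_exp' {b : ℝ} (hb : 0 < b) :
    (∫ w in Set.Ioi (0 : ℝ), Real.exp (-(b * w))) = 1 / b := by
  have h := integral_rpow_mul_exp_neg_mul_Ioi (a := 1) (r := b) one_pos hb
  rw [Real.rpow_one, Real.Gamma_one, mul_one] at h
  rw [← h]
  refine setIntegral_congr_fun measurableSet_Ioi fun w hw => ?_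
  rw [show (1 : ℝ) - 1 = 0 by ring, Real.rpow_zero, one_mul]

lemma intOn_mul_exp' {b : ℝ} (hb : 0 < b) :
    IntegrableOn (fun w : ℝ => w * Real.exp (-(b * w))) (Set.Ioi 0) := by
  have h := integrableOn_rpow_mul_exp_neg_mul_rpow (s := 1) (p := 1) (by norm_num) one_pos hb
  refine h.congr_fun (fun x hx => ?_) measurableSet_Ioi
  rw [Set.mem_Ioi] at hx
  simp only [Real.rpow_one, neg_mul]

lemma int_mul_exp' {b : ℝ} (hb : 0 < b) :
    (∫ w in Set.Ioi (0 : ℝ), w * Real.exp (-(b * w))) = 1 / b ^ 2 := by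
  have h := integral_rpow_mul_exp_neg_mul_Ioi (a := 2) (r := b) two_pos hb
  have hG : Real.Gamma 2 = 1 := by
    simpa using Real.Gamma_nat_eq_factorial 1
  rw [hG, mul_one] at h
  have h2 : ((1 : ℝ) / b) ^ (2 : ℝ) = 1 / b ^ 2 := by
    rw [show (2 : ℝ) = ((2 : ℕ) : ℝ) by norm_num, Real.rpow_natCast]
    rw [div_pow, one_pow]
  rw [← h2, ← h]
  refine setIntegral_congr_fun measurableSet_Ioi fun w hw => ?_
  rw [Set.mem_Ioi] at hw
  rw [show (2 : ℝ) - 1 = 1 by ring, Real.rpow_one]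

theorem stmt11 (c p mu t : ℝ) (hc : 0 < c) (hp : 0 < p) (hmu : 0 < mu) (ht : 0 < t)
    (n : ℕ) (hn : 0 < n) (α : Fin n → ℝ) (A : Fin n → ℝ)
    (hα : ∀ j, 0 < α j) (hαinj : Function.Injective α)
    (hA : ∑ j, A j = 1)
    (fW : ℝ → ℝ) (hfW : ∀ w : ℝ, fW w = ∑ j, A j * α j * Real.exp (-(α j) * w))
    (hdens : ∀ w : ℝ, 0 < w → 0 ≤ fW w)
    (R : ℝ) (hRpos : 0 < R)
    (hLund : c * R + p * mu * (∑ j, A j * α j / (R + α j)) - (1 / t + p * mu) = 0)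
    (d0 : ℝ) (hd0 : d0 = t * (p * mu * (∑ j, A j / α j) - c))
    (V : ℝ → ℝ) (hV : ∀ u : ℝ, V u = -d0 * Real.exp (-R * u) + u + d0) :
    V 0 = 0 ∧
      ∀ u : ℝ, 0 ≤ u →
        c * deriv V u + (1 / t + p * mu) * V u
          - p * mu * (∫ w in Set.Ioi (0 : ℝ), V (u + w) * fW w) - u / t = 0 := by
  have hVfun : V = fun u => -d0 * Real.exp (-R * u) + u + d0 := funext hV
  subst hVfun
  constructor
  · simp
  intro u _
  -- derivative
  have hderiv : deriv (fun u : ℝ => -d0 * Real.exp (-R * u) + u + d0) u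
      = d0 * R * Real.exp (-R * u) + 1 := by
    have h : HasDerivAt (fun x : ℝ => -d0 * Real.exp (-R * x) + x + d0)
        (d0 * R * Real.exp (-R * u) + 1) u := by
      have h1 : HasDerivAt (fun x : ℝ => -R * x) (-R * 1) u :=
        (hasDerivAt_id u).const_mul (-R)
      have h2 := (h1.exp.const_mul (-d0)).add (hasDerivAt_id u)
      have h3 := h2.add_const d0
      exact h3.congr_deriv (by ring)
    exact h.deriv
  rw [hderiv]
  -- the integral
  set E := Real.exp (-R * u) with hE
  -- per-term integrand
  set g : Fin n → ℝ → ℝ := fun j w =>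
    A j * α j * (-d0 * E * Real.exp (-((R + α j) * w))
      + (u + d0) * Real.exp (-(α j * w)) + w * Real.exp (-(α j * w))) with hg
  have hptw : ∀ w : ℝ, (-d0 * Real.exp (-R * (u + w)) + (u + w) + d0) * fW w
      = ∑ j, g j w := by
    intro w
    rw [hfW, Finset.mul_sum]
    refine Finset.sum_congr rfl fun j _ => ?_
    simp only [hg]
    beta_reduce
    have e1 : Real.exp (-R * (u + w)) = E * Real.exp (-(R * w)) := by
      rw [hE, ← Real.exp_add]; ring_nf
    have e2 : Real.exp (-((R + α j) * w)) = Real.exp (-(R * w)) * Real.exp (-(α j * w)) := by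
      rw [← Real.exp_add]; ring_nf
    have e3 : Real.exp (-(α j) * w) = Real.exp (-(α j * w)) := by ring_nf
    rw [e1, e2, e3]
    ring
  have hIg : ∀ j : Fin n, IntegrableOn (g j) (Set.Ioi 0) := by
    intro j
    have hb2 : 0 < α j := hα j
    have hb1 : 0 < R + α j := by linarith
    have i1 : IntegrableOn (fun w : ℝ => -d0 * E * Real.exp (-((R + α j) * w)))
        (Set.Ioi 0) := (intOn_exp' hb1).const_mul _
    have i2 : IntegrableOn (fun w : ℝ => (u + d0) * Real.exp (-(α j * w)))
        (Set.Ioi 0) := (intOn_exp' hb2).const_mul _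
    have i12 : IntegrableOn (fun w : ℝ => -d0 * E * Real.exp (-((R + α j) * w))
        + (u + d0) * Real.exp (-(α j * w))) (Set.Ioi 0) := i1.add i2
    have i123 : IntegrableOn (fun w : ℝ => -d0 * E * Real.exp (-((R + α j) * w))
        + (u + d0) * Real.exp (-(α j * w)) + w * Real.exp (-(α j * w))) (Set.Ioi 0) :=
      i12.add (intOn_mul_exp' hb2)
    have h0 : IntegrableOn (fun w : ℝ => A j * α j * (-d0 * E * Real.exp (-((R + α j) * w))
        + (u + d0) * Real.exp (-(α j * w)) + w * Real.exp (-(α j * w)))) (Set.Ioi 0) :=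
      i123.const_mul _
    exact h0.congr_fun (fun x _ => by simp only [hg]) measurableSet_Ioi
  have hJ : (∫ w in Set.Ioi (0 : ℝ),
      (-d0 * Real.exp (-R * (u + w)) + (u + w) + d0) * fW w)
      = -d0 * E * (∑ j, A j * α j / (R + α j)) + (u + d0) * (∑ j, A j)
        + ∑ j, A j / α j := by
    rw [show (fun w : ℝ => (-d0 * Real.exp (-R * (u + w)) + (u + w) + d0) * fW w)
        = fun w => ∑ j, g j w from funext hptw]
    rw [integral_finset_sum _ fun j _ => hIg j]
    rw [Finset.mul_sum, Finset.mul_sum, ← Finset.sum_add_distrib, ← Finset.sum_add_distrib]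
    refine Finset.sum_congr rfl fun j _ => ?_
    have hb2 : 0 < α j := hα j
    have hb1 : 0 < R + α j := by linarith
    have hint : (∫ w in Set.Ioi (0 : ℝ), g j w)
        = A j * α j * (-d0 * E * (1 / (R + α j)) + (u + d0) * (1 / α j)
          + 1 / (α j) ^ 2) := by
      have i1 : IntegrableOn (fun w : ℝ => -d0 * E * Real.exp (-((R + α j) * w)))
          (Set.Ioi 0) := (intOn_exp' hb1).const_mul _
      have i2 : IntegrableOn (fun w : ℝ => (u + d0) * Real.exp (-(α j * w)))
          (Set.Ioi 0) := (intOn_exp' hb2).const_mul _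
      have i12 : IntegrableOn (fun w : ℝ => -d0 * E * Real.exp (-((R + α j) * w))
          + (u + d0) * Real.exp (-(α j * w))) (Set.Ioi 0) := i1.add i2
      simp only [hg]
      rw [MeasureTheory.integral_const_mul]
      rw [MeasureTheory.integral_add i12 (intOn_mul_exp' hb2)]
      rw [MeasureTheory.integral_add i1 i2]
      rw [MeasureTheory.integral_const_mul, MeasureTheory.integral_const_mul]
      rw [int_exp' hb1, int_exp' hb2, int_mul_exp' hb2]
    rw [hint]
    field_simp
  rw [hJ, hA]
  -- final algebra
  set S1 := ∑ j, A j * α j / (R + α j) with hS1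
  set S2 := ∑ j, A j / α j with hS2
  have hd0' : p * mu * S2 - c = d0 / t := by
    rw [hd0]; field_simp
  simp only [hV]
  linear_combination (d0 * E) * hLund - hd0'
end

section
/- Let U_{1:n} ≤ ⋯ ≤ U_{n:n} be the order statistics of n i.i.d. uniform random variables on (0,1). For 0 ≤ x ≤ u_1 ≤ u_2 ≤ ⋯ ≤ u_n ≤ 1, the probability P[U_{1:n} ≥ x and U_{k:n} ≤ u_k for all k = 1, ..., n] equals (−1)ⁿ G_n(x | u_1, ..., u_n), where G_n is the Abel-Gontcharov polynomial attached to the sequence (u_1, ..., u_n). -/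
/-- Abel-Gontcharov polynomials attached to the sequence `U` (with `u₁ = U 0`),
defined by `G₀ = 1` and the recursion
`Gₙ(x|U) = xⁿ − Σ_{k<n} C(n,k) u_{k+1}^{n−k} G_k(x|U)`. -/
noncomputable def AG (U : ℕ → ℝ) : ℕ → ℝ → ℝ
  | 0, _ => 1
  | (n + 1), x => x ^ (n + 1) -
      ∑ k : Fin (n + 1), ((n + 1).choose k : ℝ) * U k ^ (n + 1 - (k : ℕ)) * AG U k x
  termination_by n => n
  decreasing_by exact k.isLt

open MeasureTheory Finset
open scoped ENNReal

lemma AG_zero (U : ℕ → ℝ) (x : ℝ) : AG U 0 x = 1 := by rw [AG]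

lemma AG_succ (U : ℕ → ℝ) (n : ℕ) (x : ℝ) : AG U (n+1) x = x ^ (n + 1) -
    ∑ k : Fin (n + 1), ((n + 1).choose k : ℝ) * U k ^ (n + 1 - (k : ℕ)) * AG U k x := by rw [AG]

lemma AG_continuous (U : ℕ → ℝ) : ∀ n, Continuous (fun x => AG U n x) := by
  intro n
  induction n using Nat.strong_induction_on with
  | _ n ih =>
    match n with
    | 0 => simpa [AG_zero] using continuous_const
    | n + 1 =>
      simp only [AG_succ]
      exact (continuous_pow (n+1)).sub (continuous_finset_sum _ fun k _ =>
        continuous_const.mul (ih k k.isLt))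

lemma AG_root (U : ℕ → ℝ) : ∀ n, AG U (n+1) (U 0) = 0 := by
  intro n
  induction n using Nat.strong_induction_on with
  | _ n ih =>
    rw [AG_succ, Fin.sum_univ_succ]
    have h0 : ∀ k : Fin n, ((n + 1).choose (k.succ) : ℝ) * U (k.succ) ^ (n + 1 - ((k.succ : Fin (n+1)) : ℕ)) * AG U (k.succ) (U 0) = 0 := by
      intro k
      have : AG U ((k : ℕ) + 1) (U 0) = 0 := ih k k.isLt
      simp [Fin.val_succ, this]
    rw [Finset.sum_congr rfl (fun k _ => h0 k)]
    simp [AG_zero]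

lemma AG_eq (U : ℕ → ℝ) (n : ℕ) (x : ℝ) : AG U n x = x ^ n -
    ∑ k : Fin n, (n.choose k : ℝ) * U k ^ (n - (k : ℕ)) * AG U k x := by
  cases n with
  | zero => simp [AG_zero]
  | succ m => exact AG_succ U m x

lemma AG_hasDerivAt (U : ℕ → ℝ) : ∀ n x, HasDerivAt (fun y => AG U (n+1) y)
    (((n:ℝ)+1) * AG (fun k => U (k+1)) n x) x := by
  intro n
  induction n using Nat.strong_induction_on with
  | _ n ih =>
    intro x
    have hfun : (fun y => AG U (n+1) y) = fun y => y ^ (n+1) -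
        (((n + 1).choose 0 : ℝ) * U 0 ^ (n + 1) * 1 +
          ∑ k : Fin n, ((n + 1).choose ((k:ℕ)+1) : ℝ) * U ((k:ℕ)+1) ^ (n - (k:ℕ)) * AG U ((k:ℕ)+1) y) := by
      funext y
      rw [AG_succ, Fin.sum_univ_succ]
      simp [AG_zero, Fin.val_succ, Nat.succ_sub_succ]
    rw [hfun]
    have hd : HasDerivAt (fun y => y ^ (n+1) -
        (((n + 1).choose 0 : ℝ) * U 0 ^ (n + 1) * 1 +
          ∑ k : Fin n, ((n + 1).choose ((k:ℕ)+1) : ℝ) * U ((k:ℕ)+1) ^ (n - (k:ℕ)) * AG U ((k:ℕ)+1) y))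
        (((n:ℝ)+1) * x ^ n -
        (0 + ∑ k : Fin n, ((n + 1).choose ((k:ℕ)+1) : ℝ) * U ((k:ℕ)+1) ^ (n - (k:ℕ)) *
            ((((k:ℕ):ℝ)+1) * AG (fun j => U (j+1)) (k:ℕ) x))) x := by
      refine HasDerivAt.sub ?_ (HasDerivAt.add (hasDerivAt_const x _) (HasDerivAt.fun_sum fun k _ => ?_))
      · simpa using (hasDerivAt_pow (n+1) x)
      · exact (ih k k.isLt x).const_mul _
    convert hd using 1
    rw [AG_eq]
    rw [mul_sub, Finset.mul_sum]
    rw [zero_add]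
    congr 1
    apply Finset.sum_congr rfl
    intro k _
    have hc : (((n+1).choose ((k:ℕ)+1) : ℕ) : ℝ) * (((k:ℕ):ℝ)+1) = ((n:ℝ)+1) * (n.choose (k:ℕ) : ℝ) := by
      have := Nat.add_one_mul_choose_eq n (k:ℕ)
      have h2 : ((n+1) * n.choose (k:ℕ) : ℕ) = ((n+1).choose ((k:ℕ)+1) * ((k:ℕ)+1) : ℕ) := by
        simpa [Nat.succ_eq_add_one] using this
      have := congrArg (Nat.cast (R := ℝ)) h2
      push_cast at this
      linarith
    push_cast
    linear_combination -(U ((k:ℕ)+1) ^ (n - (k:ℕ)) * AG (fun j => U (j+1)) (k:ℕ) x) * hc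

lemma AG_integral (U : ℕ → ℝ) (n : ℕ) (x : ℝ) :
    AG U (n+1) x = -(∫ t in x..(U 0), (((n:ℝ)+1) * AG (fun k => U (k+1)) n t)) := by
  have h := intervalIntegral.integral_eq_sub_of_hasDerivAt
    (f := fun y => AG U (n+1) y)
    (f' := fun t => ((n:ℝ)+1) * AG (fun k => U (k+1)) n t)
    (a := x) (b := U 0)
    (fun t _ => AG_hasDerivAt U n t)
    ((continuous_const.mul (AG_continuous _ n)).intervalIntegrable _ _)
  rw [h]
  rw [AG_root]
  ring

lemma AG_nonneg : ∀ (n : ℕ) (U : ℕ → ℝ) (x : ℝ), 0 ≤ x → (0 < n → x ≤ U 0) →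
    (∀ i j : ℕ, i ≤ j → j < n → U i ≤ U j) → 0 ≤ (-1:ℝ)^n * AG U n x := by
  intro n
  induction n with
  | zero => intro U x _ _ _; simp [AG_zero]
  | succ m ih =>
    intro U x hx0 hxu hmono
    have hxu' := hxu (Nat.succ_pos m)
    rw [AG_integral]
    have : (-1:ℝ)^(m+1) * -(∫ t in x..(U 0), (((m:ℝ)+1) * AG (fun k => U (k+1)) m t))
        = ∫ t in x..(U 0), ((-1:ℝ)^m * (((m:ℝ)+1) * AG (fun k => U (k+1)) m t)) := by
      conv_rhs => rw [intervalIntegral.integral_const_mul]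
      ring
    rw [this]
    apply intervalIntegral.integral_nonneg hxu'
    intro t ht
    have h1 : 0 ≤ (-1:ℝ)^m * AG (fun k => U (k+1)) m t := by
      apply ih _ _ (le_trans hx0 ht.1)
      · intro hm
        exact le_trans ht.2 (hmono 0 1 (by norm_num) (by omega))
      · intro i j hij hj
        exact hmono (i+1) (j+1) (by omega) (by omega)
    nlinarith [h1]
open MeasureTheory Finset
open scoped ENNReal

section helpers
variable {n : ℕ}

/-- count of coordinates ≤ c -/
noncomputable def cnt (c : ℝ) (y : Fin n → ℝ) : ℕ := (Finset.univ.filter (fun i => y i ≤ c)).card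

lemma measurable_cnt (c : ℝ) : Measurable (cnt (n := n) c) := by
  unfold cnt
  simp only [Finset.card_filter]
  apply Finset.measurable_sum
  intro i _
  exact Measurable.ite (measurableSet_le (measurable_pi_apply i) measurable_const)
    measurable_const measurable_const

/-- the event set -/
def SS (n : ℕ) (U : ℕ → ℝ) (x : ℝ) : Set (Fin n → ℝ) :=
  {y | (∀ i, x ≤ y i) ∧ ∀ k : Fin n, (k : ℕ) < cnt (U k) y}

lemma SS_measurable (n : ℕ) (U : ℕ → ℝ) (x : ℝ) : MeasurableSet (SS n U x) := by
  have : SS n U x = (⋂ i, {y : Fin n → ℝ | x ≤ y i}) ∩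
      ⋂ k : Fin n, cnt (U k) ⁻¹' (Set.Ioi (k : ℕ)) := by
    ext y; simp [SS, Set.mem_iInter]
  rw [this]
  exact (MeasurableSet.iInter fun i =>
      measurableSet_le measurable_const (measurable_pi_apply i)).inter
    (MeasurableSet.iInter fun k => (measurable_cnt (U k)) measurableSet_Ioi)

lemma cnt_insertNth (i : Fin (n + 1)) (t : ℝ) (z : Fin n → ℝ) (c : ℝ) :
    cnt c (i.insertNth t z) = (if t ≤ c then 1 else 0) + cnt c z := by
  rw [cnt, cnt, Finset.card_filter, Finset.card_filter, Fin.sum_univ_succAbove _ i]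
  simp [Fin.insertNth_apply_same, Fin.insertNth_apply_succAbove]

/-- tie-broken argmin events -/
def BB (n : ℕ) (i : Fin (n + 1)) : Set (Fin (n + 1) → ℝ) :=
  {y | (∀ j, j < i → y i < y j) ∧ (∀ j, y i ≤ y j)}

lemma BB_measurable (i : Fin (n + 1)) : MeasurableSet (BB n i) := by
  have : BB n i = (⋂ j, ⋂ (_ : j < i), {y : Fin (n+1) → ℝ | y i < y j}) ∩
      ⋂ j, {y : Fin (n+1) → ℝ | y i ≤ y j} := by
    ext y; simp [BB, Set.mem_iInter]
  rw [this]
  exact (MeasurableSet.iInter fun j => MeasurableSet.iInter fun _ =>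
      measurableSet_lt (measurable_pi_apply i) (measurable_pi_apply j)).inter
    (MeasurableSet.iInter fun j =>
      measurableSet_le (measurable_pi_apply i) (measurable_pi_apply j))

lemma BB_cover : (⋃ i, BB n i) = Set.univ := by
  ext y
  simp only [Set.mem_iUnion, Set.mem_univ, iff_true]
  have hne : (Finset.univ.filter (fun i : Fin (n+1) => ∀ j, y i ≤ y j)).Nonempty := by
    obtain ⟨i, _, hi⟩ := Finset.exists_min_image Finset.univ y ⟨0, Finset.mem_univ 0⟩
    exact ⟨i, by simpa using fun j => hi j (Finset.mem_univ j)⟩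
  set s := Finset.univ.filter (fun i : Fin (n+1) => ∀ j, y i ≤ y j)
  refine ⟨s.min' hne, ?_, ?_⟩
  · intro j hj
    have hmin : ∀ j', y (s.min' hne) ≤ y j' := by
      have := s.min'_mem hne; simpa [s] using this
    refine lt_of_le_of_ne (hmin j) fun heq => ?_
    have hjs : j ∈ s := by
      simp only [s, Finset.mem_filter, Finset.mem_univ, true_and]
      intro j'; rw [← heq]; exact hmin j'
    exact absurd (s.min'_le j hjs) (not_le.mpr hj)
  · have := s.min'_mem hne; simpa [s] using this

lemma BB_disjoint : Pairwise (Function.onFun Disjoint (BB n)) := by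
  intro i i' hne
  rw [Function.onFun, Set.disjoint_left]
  rintro y ⟨h1, h2⟩ ⟨h1', h2'⟩
  rcases lt_or_gt_of_ne hne with h | h
  · exact absurd (h2 i') (not_le.mpr (h1' i h))
  · exact absurd (h2' i) (not_le.mpr (h1 i' h))

lemma eval_null (t : ℝ) (j : Fin n) :
    Measure.pi (fun _ : Fin n => volume.restrict (Set.Ioo (0:ℝ) 1)) {z | z j = t} = 0 := by
  have h1 : (volume.restrict (Set.Ioo (0:ℝ) 1)) {t} = 0 := by
    rw [Measure.restrict_apply (measurableSet_singleton t)]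
    exact measure_mono_null Set.inter_subset_left (measure_singleton t)
  have : {z : Fin n → ℝ | z j = t} = Function.eval j ⁻¹' ({t} : Set ℝ) := rfl
  rw [this]
  exact Measure.pi_eval_preimage_null _ h1

end helpers

section slice
variable {n : ℕ}

lemma slice_measure (U : ℕ → ℝ) (x : ℝ)
    (hmono : ∀ i j : ℕ, i ≤ j → j < n + 1 → U i ≤ U j)
    (i : Fin (n + 1)) (t : ℝ) :
    Measure.pi (fun _ : Fin n => volume.restrict (Set.Ioo (0:ℝ) 1))
      {z : Fin n → ℝ | i.insertNth t z ∈ SS (n+1) U x ∩ BB n i} =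
    Set.indicator (Set.Icc x (U 0))
      (fun s => Measure.pi (fun _ : Fin n => volume.restrict (Set.Ioo (0:ℝ) 1))
        (SS n (fun k => U (k+1)) s)) t := by
  set μ' := Measure.pi (fun _ : Fin n => volume.restrict (Set.Ioo (0:ℝ) 1)) with hμ'
  by_cases ht : t ∈ Set.Icc x (U 0)
  · rw [Set.indicator_of_mem ht]
    obtain ⟨htx, htu⟩ := ht
    apply le_antisymm
    · apply measure_mono
      rintro z ⟨⟨hS1, hS2⟩, hB1, hB2⟩
      constructor
      · intro j
        have h := hB2 (i.succAbove j)
        rwa [Fin.insertNth_apply_same, Fin.insertNth_apply_succAbove] at h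
      · intro k
        have h2 := hS2 k.succ
        rw [cnt_insertNth, Fin.val_succ] at h2
        show (k:ℕ) < cnt (U ((k:ℕ)+1)) z
        split_ifs at h2 with h <;> omega
    · have hsub : SS n (fun k => U (k+1)) t ⊆
          {z : Fin n → ℝ | i.insertNth t z ∈ SS (n+1) U x ∩ BB n i} ∪
          ⋃ j, {z : Fin n → ℝ | z j = t} := by
        intro z hz
        by_cases hstrict : ∀ j, t < z j
        · left
          obtain ⟨hz1, hz2⟩ := hz
          refine ⟨⟨?_, ?_⟩, ?_, ?_⟩
          · intro j'
            rcases eq_or_ne j' i with rfl | hne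
            · rw [Fin.insertNth_apply_same]; exact htx
            · obtain ⟨j, rfl⟩ := Fin.exists_succAbove_eq hne
              rw [Fin.insertNth_apply_succAbove]
              exact le_trans htx (le_of_lt (hstrict j))
          · intro k
            induction k using Fin.cases with
            | zero =>
              rw [cnt_insertNth, Fin.val_zero, if_pos htu]
              simp
            | succ k =>
              rw [cnt_insertNth, Fin.val_succ]
              have hle : t ≤ U ((k:ℕ) + 1) :=
                le_trans htu (hmono 0 ((k:ℕ)+1) (Nat.zero_le _) (by omega))
              rw [if_pos hle]
              have hk : (k:ℕ) < cnt (U ((k:ℕ)+1)) z := hz2 k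
              omega
          · intro j' hj'
            have hne : j' ≠ i := ne_of_lt hj'
            obtain ⟨j, rfl⟩ := Fin.exists_succAbove_eq hne
            rw [Fin.insertNth_apply_same, Fin.insertNth_apply_succAbove]
            exact hstrict j
          · intro j'
            rcases eq_or_ne j' i with rfl | hne
            · rw [Fin.insertNth_apply_same]
            · obtain ⟨j, rfl⟩ := Fin.exists_succAbove_eq hne
              rw [Fin.insertNth_apply_same, Fin.insertNth_apply_succAbove]
              exact le_of_lt (hstrict j)
        · right
          push_neg at hstrict
          obtain ⟨j, hj⟩ := hstrict
          exact Set.mem_iUnion.2 ⟨j, le_antisymm hj (hz.1 j)⟩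
      calc μ' (SS n (fun k => U (k+1)) t)
          ≤ μ' ({z : Fin n → ℝ | i.insertNth t z ∈ SS (n+1) U x ∩ BB n i} ∪
            ⋃ j, {z : Fin n → ℝ | z j = t}) := measure_mono hsub
        _ ≤ μ' {z : Fin n → ℝ | i.insertNth t z ∈ SS (n+1) U x ∩ BB n i} +
            μ' (⋃ j, {z : Fin n → ℝ | z j = t}) := measure_union_le _ _
        _ = μ' {z : Fin n → ℝ | i.insertNth t z ∈ SS (n+1) U x ∩ BB n i} := by
            rw [measure_iUnion_null (fun j => eval_null t j), add_zero]
  · rw [Set.indicator_of_notMem ht]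
    have hempty : {z : Fin n → ℝ | i.insertNth t z ∈ SS (n+1) U x ∩ BB n i} = ∅ := by
      ext z
      simp only [Set.mem_setOf_eq, Set.mem_empty_iff_false, iff_false]
      rintro ⟨⟨hS1, hS2⟩, hB1, hB2⟩
      rw [Set.mem_Icc, not_and_or] at ht
      rcases ht with h | h
      · refine h ?_
        have := hS1 i
        rwa [Fin.insertNth_apply_same] at this
      · have h0 := hS2 0
        rw [cnt_insertNth, Fin.val_zero] at h0
        rw [if_neg h] at h0
        have hpos : 0 < cnt (U 0) z := by omega
        rw [cnt] at hpos
        obtain ⟨j, hj⟩ := Finset.card_pos.mp hpos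
        rw [Finset.mem_filter] at hj
        have hzj : z j ≤ U 0 := hj.2
        have htzj := hB2 (i.succAbove j)
        rw [Fin.insertNth_apply_same, Fin.insertNth_apply_succAbove] at htzj
        exact h (le_trans htzj hzj)
    rw [hempty]
    exact measure_empty

end slice

section key
lemma key : ∀ (n : ℕ) (U : ℕ → ℝ) (x : ℝ), 0 ≤ x → (0 < n → x ≤ U 0) →
    (∀ i j : ℕ, i ≤ j → j < n → U i ≤ U j) → (0 < n → U (n-1) ≤ 1) →
    Measure.pi (fun _ : Fin n => volume.restrict (Set.Ioo (0:ℝ) 1)) (SS n U x)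
      = ENNReal.ofReal ((-1:ℝ)^n * AG U n x) := by
  intro n
  induction n with
  | zero =>
    intro U x _ _ _ _
    have h1 : SS 0 U x = Set.univ :=
      Set.eq_univ_iff_forall.2 fun y => ⟨fun i => i.elim0, fun k => k.elim0⟩
    rw [h1, AG_zero]
    simp [Measure.pi_univ]
  | succ n IH =>
    intro U x hx0 hxu hmono hub
    have hxu' : x ≤ U 0 := hxu (Nat.succ_pos n)
    have hUn : U n ≤ 1 := by simpa using hub (Nat.succ_pos n)
    have hU01 : U 0 ≤ 1 := by
      rcases Nat.eq_zero_or_pos n with rfl | hn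
      · exact hUn
      · exact le_trans (hmono 0 n (Nat.zero_le n) (Nat.lt_succ_self n)) hUn
    set ν := volume.restrict (Set.Ioo (0:ℝ) 1) with hν
    set μ' := Measure.pi (fun _ : Fin n => ν) with hμ'
    set μ := Measure.pi (fun _ : Fin (n+1) => ν) with hμ
    set g : ℝ → ℝ := fun t => (-1:ℝ)^n * AG (fun k => U (k+1)) n t with hg
    have hSm := SS_measurable (n+1) U x
    have hcover : SS (n+1) U x = ⋃ i, SS (n+1) U x ∩ BB n i := by
      rw [← Set.inter_iUnion, BB_cover, Set.inter_univ]
    have hdecomp : μ (SS (n+1) U x) = ∑ i : Fin (n+1), μ (SS (n+1) U x ∩ BB n i) := by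
      nth_rewrite 1 [hcover]
      rw [measure_iUnion
        (fun i i' hne => ((BB_disjoint hne).mono Set.inter_subset_right Set.inter_subset_right))
        (fun i => hSm.inter (BB_measurable i)), tsum_fintype]
    have hpiece : ∀ i : Fin (n+1), μ (SS (n+1) U x ∩ BB n i)
        = ∫⁻ t, Set.indicator (Set.Icc x (U 0))
            (fun s => μ' (SS n (fun k => U (k+1)) s)) t ∂ν := by
      intro i
      have hmp := (measurePreserving_piFinSuccAbove (fun _ : Fin (n+1) => ν) i).symm
      have hA : MeasurableSet (SS (n+1) U x ∩ BB n i) := hSm.inter (BB_measurable i)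
      rw [hμ, ← hmp.measure_preimage_equiv]
      rw [Measure.prod_apply ((MeasurableEquiv.measurable _) hA)]
      apply lintegral_congr
      intro t
      have hset : (Prod.mk t ⁻¹'
          ((MeasurableEquiv.piFinSuccAbove (fun _ : Fin (n+1) => ℝ) i).symm ⁻¹'
            (SS (n+1) U x ∩ BB n i)))
          = {z : Fin n → ℝ | i.insertNth t z ∈ SS (n+1) U x ∩ BB n i} := by
        ext z
        simp [MeasurableEquiv.piFinSuccAbove_symm_apply, Fin.insertNthEquiv]
      rw [hset, slice_measure U x hmono i t]
    have hind : ∀ t, Set.indicator (Set.Icc x (U 0))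
        (fun s => μ' (SS n (fun k => U (k+1)) s)) t
        = Set.indicator (Set.Icc x (U 0)) (fun s => ENNReal.ofReal (g s)) t := by
      intro t
      by_cases ht : t ∈ Set.Icc x (U 0)
      · rw [Set.indicator_of_mem ht, Set.indicator_of_mem ht]
        exact IH (fun k => U (k+1)) t (le_trans hx0 ht.1)
          (fun hpos => le_trans ht.2 (hmono 0 1 (by omega) (by omega)))
          (fun i j hij hj => hmono (i+1) (j+1) (by omega) (by omega))
          (fun hpos => by
            show U (n - 1 + 1) ≤ 1
            rw [show n - 1 + 1 = n by omega]; exact hUn)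
      · rw [Set.indicator_of_notMem ht, Set.indicator_of_notMem ht]
    have hrestr : ν.restrict (Set.Icc x (U 0)) = volume.restrict (Set.Icc x (U 0)) := by
      rw [hν, Measure.restrict_restrict measurableSet_Icc]
      apply Measure.restrict_congr_set
      refine MeasureTheory.ae_eq_set.2 ⟨?_, ?_⟩
      · have h1 : (Set.Icc x (U 0) ∩ Set.Ioo (0:ℝ) 1) \ Set.Icc x (U 0) = ∅ :=
          Set.diff_eq_empty.mpr Set.inter_subset_left
        rw [h1]; exact measure_empty
      · refine measure_mono_null (fun z hz => ?_)
          (((Set.countable_singleton (1:ℝ)).insert 0).measure_zero volume)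
        obtain ⟨⟨hz1, hz2⟩, hz3⟩ := hz
        have : ¬ (0 < z ∧ z < 1) := fun hc => hz3 ⟨⟨hz1, hz2⟩, hc.1, hc.2⟩
        rcases not_and_or.mp this with h | h
        · left; exact le_antisymm (not_lt.mp h) (le_trans hx0 hz1)
        · right; exact Set.mem_singleton_iff.2 (le_antisymm (le_trans hz2 hU01) (not_lt.mp h))
    have hae : 0 ≤ᵐ[volume.restrict (Set.Icc x (U 0))] g := by
      refine (ae_restrict_iff' measurableSet_Icc).2 (Filter.Eventually.of_forall fun t ht => ?_)
      exact AG_nonneg n (fun k => U (k+1)) t (le_trans hx0 ht.1)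
        (fun hpos => le_trans ht.2 (hmono 0 1 (by omega) (by omega)))
        (fun i j hij hj => hmono (i+1) (j+1) (by omega) (by omega))
    have hint : IntegrableOn g (Set.Icc x (U 0)) volume :=
      (continuous_const.mul (AG_continuous _ n)).integrableOn_Icc
    have hval : ∫ t in Set.Icc x (U 0), g t = (-1:ℝ)^(n+1) * AG U (n+1) x / ((n:ℝ)+1) := by
      rw [MeasureTheory.integral_Icc_eq_integral_Ioc, ← intervalIntegral.integral_of_le hxu']
      have h1 : ∫ t in x..(U 0), g t
          = (-1:ℝ)^n * ∫ t in x..(U 0), AG (fun k => U (k+1)) n t :=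
        intervalIntegral.integral_const_mul _ _
      have h2 : AG U (n+1) x
          = -(((n:ℝ)+1) * ∫ t in x..(U 0), AG (fun k => U (k+1)) n t) := by
        rw [AG_integral U n x, intervalIntegral.integral_const_mul]
      rw [h1, h2, pow_succ]
      field_simp
    have hfinal : ∀ i : Fin (n+1), μ (SS (n+1) U x ∩ BB n i)
        = ENNReal.ofReal ((-1:ℝ)^(n+1) * AG U (n+1) x / ((n:ℝ)+1)) := by
      intro i
      rw [hpiece i, lintegral_congr hind, lintegral_indicator measurableSet_Icc,
        hrestr, ← ofReal_integral_eq_lintegral_ofReal hint hae, hval]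
    rw [hdecomp, Finset.sum_congr rfl (fun i _ => hfinal i), Finset.sum_const,
      Finset.card_univ, Fintype.card_fin, nsmul_eq_mul]
    have hcast : ((n+1:ℕ) : ℝ≥0∞) = ENNReal.ofReal ((n:ℝ)+1) := by
      rw [show ((n:ℝ)+1) = ((n+1:ℕ):ℝ) by push_cast; ring, ENNReal.ofReal_natCast]
    rw [hcast, ← ENNReal.ofReal_mul (by positivity)]
    congr 1
    field_simp
end key

section sortsec
variable {n : ℕ}

lemma sort_zero_le (hn : 0 < n) (y : Fin n → ℝ) (x : ℝ) :
    x ≤ y (Tuple.sort y ⟨0, hn⟩) ↔ ∀ i, x ≤ y i := by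
  constructor
  · intro h i
    obtain ⟨j, hj⟩ := (Tuple.sort y).surjective i
    calc x ≤ y (Tuple.sort y ⟨0, hn⟩) := h
      _ ≤ y (Tuple.sort y j) := Tuple.monotone_sort y (Fin.mk_le_of_le_val (Nat.zero_le _))
      _ = y i := by rw [hj]
  · intro h
    exact h _

lemma sort_le_iff (y : Fin n → ℝ) (k : Fin n) (c : ℝ) :
    y (Tuple.sort y k) ≤ c ↔ (k : ℕ) < cnt c y := by
  have hmono := Tuple.monotone_sort y
  have hcard : cnt c y = (Finset.univ.filter fun j => y (Tuple.sort y j) ≤ c).card := by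
    rw [cnt]
    have himg : (Finset.univ.filter fun i => y i ≤ c)
        = Finset.image (Tuple.sort y) (Finset.univ.filter fun j => y (Tuple.sort y j) ≤ c) := by
      ext i
      simp only [Finset.mem_filter, Finset.mem_univ, true_and, Finset.mem_image]
      constructor
      · intro hi
        exact ⟨(Tuple.sort y).symm i, by simpa using hi, by simp⟩
      · rintro ⟨j, hj, rfl⟩
        exact hj
    rw [himg, Finset.card_image_of_injective _ (Tuple.sort y).injective]
  rw [hcard]
  constructor
  · intro h
    have hsub : Finset.Iic k ⊆ Finset.univ.filter fun j => y (Tuple.sort y j) ≤ c := by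
      intro j hj
      rw [Finset.mem_Iic] at hj
      simp only [Finset.mem_filter, Finset.mem_univ, true_and]
      exact le_trans (hmono hj) h
    have := Finset.card_le_card hsub
    rw [Fin.card_Iic] at this
    omega
  · intro h
    by_contra hc
    push_neg at hc
    have hsub : (Finset.univ.filter fun j => y (Tuple.sort y j) ≤ c) ⊆ Finset.Iio k := by
      intro j hj
      simp only [Finset.mem_filter, Finset.mem_univ, true_and] at hj
      rw [Finset.mem_Iio]
      by_contra hk
      push_neg at hk
      exact absurd (le_trans (hmono hk) hj) (not_le.mpr hc)
    have := Finset.card_le_card hsub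
    rw [Fin.card_Iio] at this
    omega

end sortsec

theorem stmt15 (n : ℕ) (hn : 0 < n) (U : ℕ → ℝ) (x : ℝ)
    (hx0 : 0 ≤ x) (hxu : x ≤ U 0)
    (hmono : ∀ i j : ℕ, i ≤ j → j < n → U i ≤ U j)
    (hub : U (n - 1) ≤ 1) :
    Measure.pi (fun _ : Fin n => volume.restrict (Set.Ioo (0 : ℝ) 1))
      {y : Fin n → ℝ |
        x ≤ y (Tuple.sort y ⟨0, hn⟩) ∧ ∀ k : Fin n, y (Tuple.sort y k) ≤ U k} =
      ENNReal.ofReal ((-1 : ℝ) ^ n * AG U n x) := by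
  have hset : {y : Fin n → ℝ |
      x ≤ y (Tuple.sort y ⟨0, hn⟩) ∧ ∀ k : Fin n, y (Tuple.sort y k) ≤ U k} = SS n U x := by
    ext y
    simp only [Set.mem_setOf_eq, SS]
    exact and_congr (sort_zero_le hn y x) (forall_congr' fun k => sort_le_iff y k (U k))
  rw [hset]
  exact key n U x hx0 (fun _ => hxu) hmono (fun _ => hub)
end
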